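/- Let (V, ω) be a finite-dimensional real symplectic vector space and let J₀ and J₁ be two ω-compatible complex structures on V. Then the endomorphism (J₀ + J₁)/2 is invertible; in fact det((J₀ + J₁)/2) > 0. -/
import Mathlib

lemma charpoly_eval_eq_det {n : Type*} [DecidableEq n] [Fintype n]
    (M : Matrix n n ℝ) (t : ℝ) :
    M.charpoly.eval t = (t • (1 : Matrix n n ℝ) - M).det := by
  have h := RingHom.map_det (Polynomial.evalRingHom t) (Matrix.charmatrix M)
  rw [Matrix.charpoly, ← Polynomial.coe_evalRingHom, h]
  congr 1
  ext i j
  by_cases hij : i = j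
  · subst hij
    simp [Matrix.charmatrix_apply_eq, Matrix.one_apply, Matrix.smul_apply]
  · simp [Matrix.charmatrix_apply_ne _ _ _ hij, Matrix.one_apply_ne hij,
      Matrix.smul_apply]

/-- Let `(V, ω)` be a finite-dimensional real symplectic vector space and let
`J₀`, `J₁` be two `ω`-compatible complex structures on `V`.  Then the endomorphism
`(J₀ + J₁)/2` is invertible; in fact `det ((J₀ + J₁)/2) > 0`. -/
theorem halfSum_of_compatible_complexStructures_det_pos
    {V : Type*} [AddCommGroup V] [Module ℝ V] [FiniteDimensional ℝ V]
    (ω : LinearMap.BilinForm ℝ V)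
    (halt : ∀ x : V, ω x x = 0)
    (hnondeg : ∀ x : V, (∀ y : V, ω x y = 0) → x = 0)
    (J₀ J₁ : V →ₗ[ℝ] V)
    (hJ₀ : J₀ ∘ₗ J₀ = -LinearMap.id)
    (hJ₁ : J₁ ∘ₗ J₁ = -LinearMap.id)
    (hc₀ : ∀ x y : V, ω (J₀ x) (J₀ y) = ω x y)
    (hc₁ : ∀ x y : V, ω (J₁ x) (J₁ y) = ω x y)
    (hp₀ : ∀ x : V, x ≠ 0 → 0 < ω x (J₀ x))
    (hp₁ : ∀ x : V, x ≠ 0 → 0 < ω x (J₁ x)) :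
    0 < LinearMap.det ((2 : ℝ)⁻¹ • (J₀ + J₁)) ∧
      Function.Bijective ((2 : ℝ)⁻¹ • (J₀ + J₁) : V →ₗ[ℝ] V) := by
  set A : V →ₗ[ℝ] V := (2 : ℝ)⁻¹ • (J₀ + J₁) with hA
  -- `A` has no real eigenvalues
  have key : ∀ (t : ℝ) (x : V), A x = t • x → x = 0 := by
    intro t x hx
    by_contra hne
    have h1 : ω x (A x) = t * ω x x := by
      rw [hx, map_smul, smul_eq_mul]
    have h2 : ω x (A x) = (2 : ℝ)⁻¹ * (ω x (J₀ x) + ω x (J₁ x)) := by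
      simp [hA, smul_eq_mul, map_add, mul_add]
    have h3 := hp₀ x hne
    have h4 := hp₁ x hne
    have h5 := halt x
    rw [h5, mul_zero] at h1
    rw [h1] at h2
    nlinarith
  -- all the shifted maps are bijective
  have hinj : ∀ t : ℝ, Function.Injective
      (t • (LinearMap.id : V →ₗ[ℝ] V) - A) := by
    intro t
    rw [← LinearMap.ker_eq_bot, LinearMap.ker_eq_bot']
    intro x hx
    apply key t
    have : t • x - A x = 0 := by simpa using hx
    linear_combination (norm := module) -this
  have hdet_ne : ∀ t : ℝ,
      LinearMap.det (t • (LinearMap.id : V →ₗ[ℝ] V) - A) ≠ 0 := by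
    intro t
    have hbij : Function.Bijective (t • (LinearMap.id : V →ₗ[ℝ] V) - A) :=
      ⟨hinj t, LinearMap.injective_iff_surjective.mp (hinj t)⟩
    exact (LinearEquiv.ofBijective _ hbij).isUnit_det'.ne_zero
  -- bijectivity of A
  have hAinj : Function.Injective A := by
    intro x y hxy
    have : A (x - y) = (0 : ℝ) • (x - y) := by
      rw [map_sub, hxy, sub_self, zero_smul]
    have := key 0 _ this
    exact sub_eq_zero.mp this
  have hAbij : Function.Bijective A :=
    ⟨hAinj, LinearMap.injective_iff_surjective.mp hAinj⟩
  refine ⟨?_, hAbij⟩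
  -- the characteristic polynomial of A
  set n := Module.finrank ℝ V with hn
  set p := LinearMap.charpoly A with hp
  have pmonic : p.Monic := LinearMap.charpoly_monic A
  have heval : ∀ t : ℝ,
      p.eval t = LinearMap.det (t • (LinearMap.id : V →ₗ[ℝ] V) - A) := by
    intro t
    classical
    let b := Module.finBasis ℝ V
    rw [hp, ← LinearMap.charpoly_toMatrix A b, charpoly_eval_eq_det,
      ← LinearMap.det_toMatrix b]
    rw [map_sub]
    congr 1
    rw [show ((t : ℝ) • (LinearMap.id : V →ₗ[ℝ] V)) = t • LinearMap.id from rfl]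
    simp only [_root_.map_smul, LinearMap.toMatrix_id]
  have hpne : ∀ t : ℝ, p.eval t ≠ 0 := fun t => by
    rw [heval t]; exact hdet_ne t
  -- n is even, from det(J₀)² = (−1)ⁿ
  have heven : Even n := by
    have hdc : LinearMap.det J₀ * LinearMap.det J₀ =
        LinearMap.det (-(LinearMap.id : V →ₗ[ℝ] V)) := by
      rw [← LinearMap.det_comp, hJ₀]
    have hneg : LinearMap.det (-(LinearMap.id : V →ₗ[ℝ] V)) = (-1 : ℝ) ^ n := by
      have : (-(LinearMap.id : V →ₗ[ℝ] V)) = (-1 : ℝ) • LinearMap.id := by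
        ext x; simp
      rw [this, LinearMap.det_smul, LinearMap.det_id, mul_one]
    rw [hneg] at hdc
    by_contra hodd
    rw [Nat.not_even_iff_odd] at hodd
    rw [hodd.neg_one_pow] at hdc
    nlinarith [sq_nonneg (LinearMap.det J₀)]
  rcases subsingleton_or_nontrivial V with hV | hV
  · -- trivial case
    have : A = LinearMap.id := by ext x; exact Subsingleton.elim _ _
    rw [this, LinearMap.det_id]
    norm_num
  · -- p is positive everywhere
    have hdeg : 0 < p.degree := by
      rw [Polynomial.degree_eq_natDegree pmonic.ne_zero]
      have : p.natDegree = n := LinearMap.charpoly_natDegree A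
      rw [this]
      exact_mod_cast Module.finrank_pos
    have htop : Filter.Tendsto (fun x : ℝ => p.eval x) Filter.atTop
        Filter.atTop :=
      Polynomial.tendsto_atTop_of_leadingCoeff_nonneg p hdeg
        (by rw [pmonic.leadingCoeff]; norm_num)
    obtain ⟨T, hT⟩ := (htop.eventually_ge_atTop 1).exists
    have hpos : ∀ t : ℝ, 0 < p.eval t := by
      intro t
      rcases lt_trichotomy (p.eval t) 0 with h | h | h
      · exfalso
        have hsub : Set.uIcc (p.eval t) (p.eval T) ⊆
            (fun x => p.eval x) '' Set.uIcc t T :=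
          intermediate_value_uIcc (p.continuous_aeval.continuousOn)
        have h0 : (0 : ℝ) ∈ Set.uIcc (p.eval t) (p.eval T) :=
          Set.mem_uIcc.mpr (Or.inl ⟨h.le, by linarith⟩)
        obtain ⟨s, _, hs⟩ := hsub h0
        exact hpne s hs
      · exact absurd h (hpne t)
      · exact h
    have hdetA : LinearMap.det A = (-1 : ℝ) ^ n * p.coeff 0 :=
      LinearMap.det_eq_sign_charpoly_coeff A
    rw [hdetA, heven.neg_one_pow, one_mul, Polynomial.coeff_zero_eq_eval_zero]
    exact hpos 0
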